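/- Let A be an n×n real symmetric positive semidefinite matrix of rank r with 1 ≤ r < n, and let B be any n×n real symmetric matrix. Then there exists an invertible n×n real matrix T such that simultaneously TᵀAT = diag(I_r, O_{n−r}) and TᵀBT has the 4-block form [[O_{r−s₁}, O, E₁₀, O],[O, Γ₁, F₁₀, O],[E₁₀ᵀ, F₁₀ᵀ, O_{n−r−s₀}, O],[O, O, O, Γ₀]], where Γ₁ is a nonsingular diagonal s₁×s₁ matrix, Γ₀ is a nonsingular diagonal s₀×s₀ matrix, and E₁₀, F₁₀ are real matrices of the indicated sizes (0 ≤ s₁ ≤ r, 0 ≤ s₀ ≤ n−r). -/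

import Mathlib

open Matrix

private lemma spec_zero_first {m : ℕ} (M : Matrix (Fin m) (Fin m) ℝ) (hM : M.IsSymm) :
    ∃ (s : ℕ) (_ : s ≤ m) (Q : Matrix (Fin m) (Fin (m - s) ⊕ Fin s) ℝ) (g : Fin s → ℝ),
      (∀ i, g i ≠ 0) ∧ Qᵀ * Q = 1 ∧ Q * Qᵀ = 1 ∧
      Qᵀ * M * Q = fromBlocks 0 0 0 (diagonal g) := by
  have hH : M.IsHermitian := hM
  set eig := hH.eigenvalues with heig
  set U : Matrix (Fin m) (Fin m) ℝ := (hH.eigenvectorUnitary : Matrix (Fin m) (Fin m) ℝ) with hU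
  have hU1 : Uᵀ * U = 1 := by
    have := hH.eigenvectorUnitary.2
    rw [Matrix.mem_unitaryGroup_iff'] at this
    simpa [Matrix.star_eq_conjTranspose, Matrix.conjTranspose_eq_transpose_of_trivial] using this
  have hU2 : U * Uᵀ = 1 := (mul_eq_one_comm).mp hU1
  have hSpec : Uᵀ * M * U = diagonal eig := by
    have h' : M = U * diagonal eig * Uᵀ := by
      simpa [Matrix.star_eq_conjTranspose, Matrix.conjTranspose_eq_transpose_of_trivial, hU] using hH.spectral_theorem
    calc Uᵀ * M * U = (Uᵀ * U) * diagonal eig * (Uᵀ * U) := by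
          rw [h']; simp only [Matrix.mul_assoc]
      _ = diagonal eig := by rw [hU1, Matrix.one_mul, Matrix.mul_one]
  classical
  set s := Fintype.card { i // eig i ≠ 0 } with hs
  have hsm : s ≤ m := by
    calc s ≤ Fintype.card (Fin m) := Fintype.card_subtype_le _
      _ = m := Fintype.card_fin m
  have hcard0 : Fintype.card { i // ¬ eig i ≠ 0 } = m - s := by
    rw [Fintype.card_subtype_compl, Fintype.card_fin, hs]
  let e1 : Fin s ≃ { i // eig i ≠ 0 } := (Fintype.equivFinOfCardEq rfl).symm
  let e0 : Fin (m - s) ≃ { i // ¬ eig i ≠ 0 } := (Fintype.equivFinOfCardEq hcard0).symm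
  let φ : Fin (m - s) ⊕ Fin s ≃ Fin m :=
    (Equiv.sumCongr e0 e1).trans ((Equiv.sumComm _ _).trans (Equiv.sumCompl (fun i => eig i ≠ 0)))
  have hφ0 : ∀ j, eig (φ (Sum.inl j)) = 0 := by
    intro j
    have : ¬ eig ((e0 j : Fin m)) ≠ 0 := (e0 j).2
    simpa [φ, Equiv.sumCompl] using not_not.mp this
  have hφ1 : ∀ j, eig (φ (Sum.inr j)) ≠ 0 := by
    intro j
    have : eig ((e1 j : Fin m)) ≠ 0 := (e1 j).2
    simpa [φ, Equiv.sumCompl] using this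
  refine ⟨s, hsm, U.submatrix id ⇑φ, fun j => eig (φ (Sum.inr j)), hφ1, ?_, ?_, ?_⟩
  · have h := Matrix.submatrix_mul_equiv Uᵀ U (⇑φ) (Equiv.refl (Fin m)) (⇑φ)
    simp only [Equiv.coe_refl] at h
    rw [transpose_submatrix]
    calc Uᵀ.submatrix (⇑φ) id * U.submatrix id (⇑φ) = (Uᵀ * U).submatrix (⇑φ) (⇑φ) := h
      _ = 1 := by rw [hU1, Matrix.submatrix_one_equiv]
  · have h := Matrix.submatrix_mul_equiv U Uᵀ id φ id
    rw [transpose_submatrix]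
    calc U.submatrix id (⇑φ) * Uᵀ.submatrix (⇑φ) id = (U * Uᵀ).submatrix id id := h
      _ = 1 := by rw [hU2, Matrix.submatrix_id_id]
  · have h1 := Matrix.submatrix_mul_equiv Uᵀ M (⇑φ) (Equiv.refl (Fin m)) id
    have h2 := Matrix.submatrix_mul_equiv (Uᵀ * M) U (⇑φ) (Equiv.refl (Fin m)) (⇑φ)
    simp only [Equiv.coe_refl, Matrix.submatrix_id_id] at h1 h2
    rw [transpose_submatrix]
    calc Uᵀ.submatrix (⇑φ) id * M * U.submatrix id (⇑φ)
        = (Uᵀ * M).submatrix (⇑φ) id * U.submatrix id (⇑φ) := by rw [h1]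
      _ = (Uᵀ * M * U).submatrix (⇑φ) (⇑φ) := h2
      _ = (diagonal eig).submatrix (⇑φ) (⇑φ) := by rw [hSpec]
      _ = diagonal (eig ∘ ⇑φ) := Matrix.submatrix_diagonal_equiv eig φ
      _ = fromBlocks 0 0 0 (diagonal fun j => eig (φ (Sum.inr j))) := by
          ext (i | i) (j | j) <;>
            simp [Matrix.diagonal_apply, Matrix.fromBlocks, hφ0]


private lemma psd_normal {n r : ℕ} (hrn : r ≤ n) (A : Matrix (Fin n) (Fin n) ℝ)
    (hA : A.PosSemidef) (hrank : A.rank = r) :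
    ∃ (P : Matrix (Fin n) (Fin r ⊕ Fin (n - r)) ℝ)
      (P' : Matrix (Fin r ⊕ Fin (n - r)) (Fin n) ℝ),
      P * P' = 1 ∧ Pᵀ * A * P = fromBlocks 1 0 0 0 := by
  classical
  have hH : A.IsHermitian := hA.1
  set eig := hH.eigenvalues with heig
  set U : Matrix (Fin n) (Fin n) ℝ := (hH.eigenvectorUnitary : Matrix (Fin n) (Fin n) ℝ) with hU
  have hU1 : Uᵀ * U = 1 := by
    have := hH.eigenvectorUnitary.2
    rw [Matrix.mem_unitaryGroup_iff'] at this
    simpa [Matrix.star_eq_conjTranspose, Matrix.conjTranspose_eq_transpose_of_trivial] using this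
  have hU2 : U * Uᵀ = 1 := (mul_eq_one_comm).mp hU1
  have hSpec : Uᵀ * A * U = diagonal eig := by
    have h' : A = U * diagonal eig * Uᵀ := by
      simpa [Matrix.star_eq_conjTranspose, Matrix.conjTranspose_eq_transpose_of_trivial, hU] using hH.spectral_theorem
    calc Uᵀ * A * U = (Uᵀ * U) * diagonal eig * (Uᵀ * U) := by
          rw [h']; simp only [Matrix.mul_assoc]
      _ = diagonal eig := by rw [hU1, Matrix.one_mul, Matrix.mul_one]
  have hcard1 : Fintype.card { i // eig i ≠ 0 } = r := by
    rw [← hH.rank_eq_card_non_zero_eigs, hrank]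
  have hcard0 : Fintype.card { i // ¬ eig i ≠ 0 } = n - r := by
    rw [Fintype.card_subtype_compl, Fintype.card_fin, hcard1]
  let e1 : Fin r ≃ { i // eig i ≠ 0 } := (Fintype.equivFinOfCardEq hcard1).symm
  let e0 : Fin (n - r) ≃ { i // ¬ eig i ≠ 0 } := (Fintype.equivFinOfCardEq hcard0).symm
  let φ : Fin r ⊕ Fin (n - r) ≃ Fin n :=
    (Equiv.sumCongr e1 e0).trans (Equiv.sumCompl (fun i => eig i ≠ 0))
  have hφ1 : ∀ j, eig (φ (Sum.inl j)) ≠ 0 := fun j => (e1 j).2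
  have hφ0 : ∀ j, eig (φ (Sum.inr j)) = 0 := fun j => not_not.mp (e0 j).2
  set d : Fin r → ℝ := fun j => eig (φ (Sum.inl j)) with hd
  have hdpos : ∀ j, 0 < d j := by
    intro j
    exact lt_of_le_of_ne (hA.eigenvalues_nonneg _) (Ne.symm (hφ1 j))
  set Q : Matrix (Fin n) (Fin r ⊕ Fin (n - r)) ℝ := U.submatrix id ⇑φ with hQ
  have hQAQ : Qᵀ * A * Q = fromBlocks (diagonal d) 0 0 0 := by
    have h1 := Matrix.submatrix_mul_equiv Uᵀ A (⇑φ) (Equiv.refl (Fin n)) id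
    have h2 := Matrix.submatrix_mul_equiv (Uᵀ * A) U (⇑φ) (Equiv.refl (Fin n)) (⇑φ)
    simp only [Equiv.coe_refl, Matrix.submatrix_id_id] at h1 h2
    rw [hQ, transpose_submatrix]
    calc Uᵀ.submatrix (⇑φ) id * A * U.submatrix id (⇑φ)
        = (Uᵀ * A).submatrix (⇑φ) id * U.submatrix id (⇑φ) := by rw [h1]
      _ = (Uᵀ * A * U).submatrix (⇑φ) (⇑φ) := h2
      _ = (diagonal eig).submatrix (⇑φ) (⇑φ) := by rw [hSpec]
      _ = diagonal (eig ∘ ⇑φ) := Matrix.submatrix_diagonal_equiv eig φ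
      _ = fromBlocks (diagonal d) 0 0 0 := by
          ext (i | i) (j | j) <;>
            simp [Matrix.diagonal_apply, Matrix.fromBlocks, hφ0, hd]
  have hQQ : Q * Qᵀ = 1 := by
    have h := Matrix.submatrix_mul_equiv U Uᵀ id φ id
    rw [hQ, transpose_submatrix]
    calc U.submatrix id (⇑φ) * Uᵀ.submatrix (⇑φ) id = (U * Uᵀ).submatrix id id := h
      _ = 1 := by rw [hU2, Matrix.submatrix_id_id]
  set S : Matrix (Fin r ⊕ Fin (n - r)) (Fin r ⊕ Fin (n - r)) ℝ :=
    fromBlocks (diagonal fun j => (Real.sqrt (d j))⁻¹) 0 0 1 with hS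
  set S' : Matrix (Fin r ⊕ Fin (n - r)) (Fin r ⊕ Fin (n - r)) ℝ :=
    fromBlocks (diagonal fun j => Real.sqrt (d j)) 0 0 1 with hS'
  have hsqrt_ne : ∀ j, Real.sqrt (d j) ≠ 0 := fun j =>
    ne_of_gt (Real.sqrt_pos.mpr (hdpos j))
  have hSS' : S * S' = 1 := by
    rw [hS, hS', fromBlocks_multiply]
    simp only [Matrix.mul_zero, Matrix.zero_mul, add_zero, zero_add, Matrix.mul_one,
      Matrix.diagonal_mul_diagonal]
    rw [show (fun j => (Real.sqrt (d j))⁻¹ * Real.sqrt (d j)) = fun _ => (1 : ℝ) from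
      funext fun j => inv_mul_cancel₀ (hsqrt_ne j)]
    rw [Matrix.diagonal_one, fromBlocks_one]
  refine ⟨Q * S, S' * Qᵀ, ?_, ?_⟩
  · calc Q * S * (S' * Qᵀ) = Q * (S * S') * Qᵀ := by simp only [Matrix.mul_assoc]
      _ = 1 := by rw [hSS', Matrix.mul_one, hQQ]
  · have hSt : (Q * S)ᵀ = Sᵀ * Qᵀ := Matrix.transpose_mul Q S
    calc (Q * S)ᵀ * A * (Q * S) = Sᵀ * (Qᵀ * A * Q) * S := by
          rw [hSt]; simp only [Matrix.mul_assoc]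
      _ = Sᵀ * fromBlocks (diagonal d) 0 0 0 * S := by rw [hQAQ]
      _ = fromBlocks 1 0 0 0 := by
          rw [hS, fromBlocks_transpose, fromBlocks_multiply, fromBlocks_multiply]
          simp only [Matrix.transpose_zero, Matrix.transpose_one, Matrix.diagonal_transpose,
            Matrix.mul_zero, Matrix.zero_mul, add_zero, zero_add, Matrix.mul_one,
            Matrix.one_mul, Matrix.diagonal_mul_diagonal]
          congr 1
          · rw [show (fun j => (Real.sqrt (d j))⁻¹ * d j * (Real.sqrt (d j))⁻¹) = fun _ => (1 : ℝ)
              from funext fun j => ?_, Matrix.diagonal_one]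
            have hsq : Real.sqrt (d j) * Real.sqrt (d j) = d j :=
              Real.mul_self_sqrt (hdpos j).le
            rw [← hsq]
            field_simp
            rw [Real.sqrt_sq (Real.sqrt_nonneg _)]
            exact div_self (pow_ne_zero 2 (hsqrt_ne j))


theorem stmt7 {n r : ℕ} (hr : 1 ≤ r) (hrn : r < n)
    (A B : Matrix (Fin n) (Fin n) ℝ) (hA : A.PosSemidef) (hrank : A.rank = r)
    (hB : B.IsSymm) :
    ∃ (T : Matrix (Fin n) (Fin n) ℝ) (_ : IsUnit T.det)
      (s1 : ℕ) (hs1 : s1 ≤ r) (s0 : ℕ) (hs0 : s0 ≤ n - r)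
      (G1 : Fin s1 → ℝ) (G0 : Fin s0 → ℝ)
      (E : Matrix (Fin (r - s1)) (Fin (n - r - s0)) ℝ)
      (F : Matrix (Fin s1) (Fin (n - r - s0)) ℝ),
      (∀ i, G1 i ≠ 0) ∧ (∀ i, G0 i ≠ 0) ∧
      (Tᵀ * A * T).submatrix
          (finSumFinEquiv.trans (finCongr (Nat.add_sub_cancel' hrn.le)) :
            Fin r ⊕ Fin (n - r) ≃ Fin n)
          (finSumFinEquiv.trans (finCongr (Nat.add_sub_cancel' hrn.le)))
        = Matrix.fromBlocks 1 0 0 0 ∧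
      (Tᵀ * B * T).submatrix
          ((Equiv.sumCongr
              (finSumFinEquiv.trans (finCongr (Nat.sub_add_cancel hs1)) :
                Fin (r - s1) ⊕ Fin s1 ≃ Fin r)
              (finSumFinEquiv.trans (finCongr (Nat.sub_add_cancel hs0)) :
                Fin (n - r - s0) ⊕ Fin s0 ≃ Fin (n - r))).trans
            (finSumFinEquiv.trans (finCongr (Nat.add_sub_cancel' hrn.le))))
          ((Equiv.sumCongr
              (finSumFinEquiv.trans (finCongr (Nat.sub_add_cancel hs1)))
              (finSumFinEquiv.trans (finCongr (Nat.sub_add_cancel hs0)))).trans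
            (finSumFinEquiv.trans (finCongr (Nat.add_sub_cancel' hrn.le))))
        = Matrix.fromBlocks
            (Matrix.fromBlocks 0 0 0 (Matrix.diagonal G1))
            (Matrix.fromBlocks E 0 F 0)
            (Matrix.fromBlocks Eᵀ Fᵀ 0 0)
            (Matrix.fromBlocks 0 0 0 (Matrix.diagonal G0)) := by
  classical
  obtain ⟨P, P', hPP', hPA⟩ := psd_normal hrn.le A hA hrank
  set B' : Matrix (Fin r ⊕ Fin (n - r)) (Fin r ⊕ Fin (n - r)) ℝ := Pᵀ * B * P with hB'def
  have hB'symm : B'ᵀ = B' := by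
    rw [hB'def, Matrix.transpose_mul, Matrix.transpose_mul, Matrix.transpose_transpose, hB,
      Matrix.mul_assoc]
  set B11 := B'.toBlocks₁₁ with hB11def
  set B12 := B'.toBlocks₁₂ with hB12def
  set B22 := B'.toBlocks₂₂ with hB22def
  have h21 : B'.toBlocks₂₁ = B12ᵀ := by
    ext i j
    simp only [Matrix.toBlocks₂₁, Matrix.toBlocks₁₂, Matrix.transpose_apply, Matrix.of_apply,
      hB12def]
    conv_lhs => rw [← hB'symm]
    rfl
  have hBlocks : B' = fromBlocks B11 B12 B12ᵀ B22 := by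
    conv_lhs => rw [← Matrix.fromBlocks_toBlocks B']
    rw [h21]
  have hB22symm : B22.IsSymm := by
    ext i j
    exact congrFun (congrFun hB'symm (Sum.inr i)) (Sum.inr j)
  obtain ⟨s0, hs0, Q0, g0, hg0, hQ0l, hQ0r, hQ0B⟩ := spec_zero_first B22 hB22symm
  -- κ := Fin (n - r - s0) ⊕ Fin s0
  set C1 : Matrix (Fin r ⊕ Fin (n - r)) (Fin r ⊕ (Fin (n - r - s0) ⊕ Fin s0)) ℝ :=
    fromBlocks 1 0 0 Q0 with hC1def
  have hA1 : C1ᵀ * fromBlocks (1 : Matrix (Fin r) (Fin r) ℝ) 0 0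
      (0 : Matrix (Fin (n - r)) (Fin (n - r)) ℝ) * C1 = fromBlocks 1 0 0 0 := by
    rw [hC1def, fromBlocks_transpose, fromBlocks_multiply, fromBlocks_multiply]
    simp
  set V : Matrix (Fin r) (Fin (n - r - s0) ⊕ Fin s0) ℝ := B12 * Q0 with hVdef
  set D : Matrix (Fin (n - r - s0) ⊕ Fin s0) (Fin (n - r - s0) ⊕ Fin s0) ℝ :=
    fromBlocks 0 0 0 (diagonal g0) with hDdef
  have hDsymm : Dᵀ = D := by
    rw [hDdef, fromBlocks_transpose]
    simp
  have hB1 : C1ᵀ * B' * C1 = fromBlocks B11 V Vᵀ D := by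
    rw [hC1def, hBlocks, fromBlocks_transpose, fromBlocks_multiply, fromBlocks_multiply]
    simp only [Matrix.transpose_one, Matrix.transpose_zero, Matrix.one_mul, Matrix.mul_one,
      Matrix.zero_mul, Matrix.mul_zero, add_zero, zero_add]
    rw [hVdef, Matrix.transpose_mul, hQ0B]
  set V0 : Matrix (Fin r) (Fin (n - r - s0)) ℝ := V.submatrix id Sum.inl with hV0def
  set W : Matrix (Fin r) (Fin s0) ℝ := V.submatrix id Sum.inr with hWdef
  have hV : V = fromCols V0 W := by
    ext i (j | j) <;> rfl
  set Y : Matrix (Fin r) (Fin s0) ℝ := W * diagonal (fun i => (g0 i)⁻¹) with hYdef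
  set Z : Matrix (Fin (n - r - s0) ⊕ Fin s0) (Fin r) ℝ :=
    fromRows (0 : Matrix (Fin (n - r - s0)) (Fin r) ℝ) (-Yᵀ) with hZdef
  set Sh : Matrix (Fin r ⊕ (Fin (n - r - s0) ⊕ Fin s0))
      (Fin r ⊕ (Fin (n - r - s0) ⊕ Fin s0)) ℝ := fromBlocks 1 0 Z 1 with hShdef
  have hZt : Zᵀ = fromCols 0 (-Y) := by
    rw [hZdef, transpose_fromRows, Matrix.transpose_zero, Matrix.transpose_neg,
      Matrix.transpose_transpose]
  have hZtD : Zᵀ * D = fromCols 0 (-W) := by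
    rw [hZt, hDdef, fromCols_mul_fromBlocks]
    simp only [Matrix.zero_mul, Matrix.mul_zero, add_zero, zero_add, Matrix.neg_mul]
    rw [hYdef, Matrix.mul_assoc, Matrix.diagonal_mul_diagonal]
    rw [show (fun i => (g0 i)⁻¹ * g0 i) = fun _ => (1 : ℝ) from
      funext fun i => inv_mul_cancel₀ (hg0 i), Matrix.diagonal_one, Matrix.mul_one]
  have hL : V + Zᵀ * D = fromCols V0 0 := by
    rw [hZtD, hV]
    ext i (j | j) <;> simp [Matrix.fromCols]
  have hA2 : Shᵀ * fromBlocks (1 : Matrix (Fin r) (Fin r) ℝ) 0 0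
      (0 : Matrix (Fin (n - r - s0) ⊕ Fin s0) (Fin (n - r - s0) ⊕ Fin s0) ℝ) * Sh
      = fromBlocks 1 0 0 0 := by
    rw [hShdef, fromBlocks_transpose, fromBlocks_multiply, fromBlocks_multiply]
    simp
  set K : Matrix (Fin r) (Fin r) ℝ := B11 + Zᵀ * Vᵀ + (V + Zᵀ * D) * Z with hKdef
  have hB11symm : B11ᵀ = B11 := by
    ext i j
    exact congrFun (congrFun hB'symm (Sum.inl i)) (Sum.inl j)
  have hKsymm : K.IsSymm := by
    show Kᵀ = K
    rw [hKdef]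
    simp only [Matrix.transpose_add, Matrix.transpose_mul, Matrix.transpose_transpose,
      hDsymm, hB11symm, Matrix.mul_add, Matrix.add_mul]
    simp only [← Matrix.mul_assoc]
    abel
  have hB2 : Shᵀ * fromBlocks B11 V Vᵀ D * Sh
      = fromBlocks K (fromCols V0 0) (fromCols V0 0)ᵀ D := by
    rw [hShdef, fromBlocks_transpose, fromBlocks_multiply, fromBlocks_multiply]
    simp only [Matrix.transpose_one, Matrix.transpose_zero, Matrix.one_mul, Matrix.mul_one,
      Matrix.zero_mul, Matrix.mul_zero, add_zero, zero_add]
    rw [← hL, ← hKdef]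
    rw [Matrix.transpose_add, Matrix.transpose_mul, Matrix.transpose_mul, hDsymm,
      Matrix.transpose_transpose]
  obtain ⟨s1, hs1, Q1, g1, hg1, hQ1l, hQ1r, hQ1K⟩ := spec_zero_first K hKsymm
  set C2 : Matrix (Fin r ⊕ (Fin (n - r - s0) ⊕ Fin s0))
      ((Fin (r - s1) ⊕ Fin s1) ⊕ (Fin (n - r - s0) ⊕ Fin s0)) ℝ :=
    fromBlocks Q1 0 0 1 with hC2def
  have hA3 : C2ᵀ * fromBlocks (1 : Matrix (Fin r) (Fin r) ℝ) 0 0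
      (0 : Matrix (Fin (n - r - s0) ⊕ Fin s0) (Fin (n - r - s0) ⊕ Fin s0) ℝ) * C2
      = fromBlocks 1 0 0 0 := by
    rw [hC2def, fromBlocks_transpose, fromBlocks_multiply, fromBlocks_multiply]
    simp only [Matrix.transpose_one, Matrix.transpose_zero, Matrix.one_mul, Matrix.mul_one,
      Matrix.zero_mul, Matrix.mul_zero, add_zero, zero_add]
    rw [hQ1l]
  set G : Matrix (Fin (r - s1) ⊕ Fin s1) (Fin (n - r - s0)) ℝ := Q1ᵀ * V0 with hGdef
  set E : Matrix (Fin (r - s1)) (Fin (n - r - s0)) ℝ := G.submatrix Sum.inl id with hEdef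
  set F : Matrix (Fin s1) (Fin (n - r - s0)) ℝ := G.submatrix Sum.inr id with hFdef
  have hQ1L : Q1ᵀ * fromCols V0 (0 : Matrix (Fin r) (Fin s0) ℝ)
      = fromBlocks E 0 F (0 : Matrix (Fin s1) (Fin s0) ℝ) := by
    ext (i | i) (j | j) <;>
      simp [Matrix.mul_apply, Matrix.fromCols, Matrix.fromBlocks, hEdef, hFdef, hGdef,
        Matrix.submatrix, Matrix.mul_apply]
  have hB3 : C2ᵀ * fromBlocks K (fromCols V0 0) (fromCols V0 0)ᵀ D * C2
      = fromBlocks (fromBlocks 0 0 0 (diagonal g1)) (fromBlocks E 0 F 0)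
          (fromBlocks Eᵀ Fᵀ 0 0) (fromBlocks 0 0 0 (diagonal g0)) := by
    rw [hC2def, fromBlocks_transpose, fromBlocks_multiply, fromBlocks_multiply]
    simp only [Matrix.transpose_one, Matrix.transpose_zero, Matrix.one_mul, Matrix.mul_one,
      Matrix.zero_mul, Matrix.mul_zero, add_zero, zero_add]
    have h21' : (fromCols V0 (0 : Matrix (Fin r) (Fin s0) ℝ))ᵀ * Q1
        = fromBlocks Eᵀ Fᵀ 0 0 := by
      calc (fromCols V0 (0 : Matrix (Fin r) (Fin s0) ℝ))ᵀ * Q1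
          = (Q1ᵀ * fromCols V0 (0 : Matrix (Fin r) (Fin s0) ℝ))ᵀ := by
            rw [Matrix.transpose_mul, Matrix.transpose_transpose]
        _ = fromBlocks Eᵀ Fᵀ 0 0 := by
            rw [hQ1L, fromBlocks_transpose]
            simp
    rw [hQ1K, hQ1L, h21', hDdef]
  set M : Matrix (Fin n) ((Fin (r - s1) ⊕ Fin s1) ⊕ (Fin (n - r - s0) ⊕ Fin s0)) ℝ :=
    P * C1 * Sh * C2 with hMdef
  have key : ∀ X : Matrix (Fin n) (Fin n) ℝ,
      Mᵀ * X * M = C2ᵀ * ((Shᵀ * ((C1ᵀ * (Pᵀ * X * P)) * C1)) * Sh) * C2 := by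
    intro X
    rw [hMdef]
    simp only [Matrix.transpose_mul, Matrix.mul_assoc]
  have hMA : Mᵀ * A * M = fromBlocks 1 0 0 0 := by
    rw [key, hPA, hA1, hA2, hA3]
  have hMB : Mᵀ * B * M
      = fromBlocks (fromBlocks 0 0 0 (diagonal g1)) (fromBlocks E 0 F 0)
          (fromBlocks Eᵀ Fᵀ 0 0) (fromBlocks 0 0 0 (diagonal g0)) := by
    rw [key, ← hB'def, hB1, hB2, hB3]
  set e : Fin r ⊕ Fin (n - r) ≃ Fin n :=
    finSumFinEquiv.trans (finCongr (Nat.add_sub_cancel' hrn.le)) with hedef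
  set e1 : Fin (r - s1) ⊕ Fin s1 ≃ Fin r :=
    finSumFinEquiv.trans (finCongr (Nat.sub_add_cancel hs1)) with he1def
  set e0 : Fin (n - r - s0) ⊕ Fin s0 ≃ Fin (n - r) :=
    finSumFinEquiv.trans (finCongr (Nat.sub_add_cancel hs0)) with he0def
  set eτ : ((Fin (r - s1) ⊕ Fin s1) ⊕ (Fin (n - r - s0) ⊕ Fin s0)) ≃ Fin n :=
    (Equiv.sumCongr e1 e0).trans e with heτdef
  set T : Matrix (Fin n) (Fin n) ℝ := M.submatrix id ⇑eτ.symm with hTdef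
  have hTsub : ∀ X : Matrix (Fin n) (Fin n) ℝ,
      Tᵀ * X * T = (Mᵀ * X * M).submatrix ⇑eτ.symm ⇑eτ.symm := by
    intro X
    rw [hTdef, transpose_submatrix]
    have h1 : Mᵀ.submatrix ⇑eτ.symm id * X = (Mᵀ * X).submatrix ⇑eτ.symm id := by
      simpa using Matrix.submatrix_mul_equiv Mᵀ X (⇑eτ.symm) (Equiv.refl (Fin n)) id
    rw [h1]
    simpa using Matrix.submatrix_mul_equiv (Mᵀ * X) M (⇑eτ.symm) (Equiv.refl (Fin n)) ⇑eτ.symm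
  have hdet : IsUnit T.det := by
    set C2' : Matrix ((Fin (r - s1) ⊕ Fin s1) ⊕ (Fin (n - r - s0) ⊕ Fin s0))
        (Fin r ⊕ (Fin (n - r - s0) ⊕ Fin s0)) ℝ := fromBlocks Q1ᵀ 0 0 1 with hC2'def
    set Sh' : Matrix (Fin r ⊕ (Fin (n - r - s0) ⊕ Fin s0))
        (Fin r ⊕ (Fin (n - r - s0) ⊕ Fin s0)) ℝ := fromBlocks 1 0 (-Z) 1 with hSh'def
    set C1' : Matrix (Fin r ⊕ (Fin (n - r - s0) ⊕ Fin s0))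
        (Fin r ⊕ Fin (n - r)) ℝ := fromBlocks 1 0 0 Q0ᵀ with hC1'def
    have h1 : C2 * C2' = 1 := by
      rw [hC2def, hC2'def, fromBlocks_multiply]
      simp only [Matrix.one_mul, Matrix.mul_one, Matrix.zero_mul, Matrix.mul_zero, add_zero,
        zero_add]
      rw [hQ1r, fromBlocks_one]
    have h2 : Sh * Sh' = 1 := by
      rw [hShdef, hSh'def, fromBlocks_multiply]
      simp only [Matrix.one_mul, Matrix.mul_one, Matrix.zero_mul, Matrix.mul_zero, add_zero,
        zero_add]
      rw [show Z + -Z = 0 from add_neg_cancel Z, fromBlocks_one]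
    have h3 : C1 * C1' = 1 := by
      rw [hC1def, hC1'def, fromBlocks_multiply]
      simp only [Matrix.one_mul, Matrix.mul_one, Matrix.zero_mul, Matrix.mul_zero, add_zero,
        zero_add]
      rw [hQ0r, fromBlocks_one]
    set N0 : Matrix ((Fin (r - s1) ⊕ Fin s1) ⊕ (Fin (n - r - s0) ⊕ Fin s0)) (Fin n) ℝ :=
      C2' * (Sh' * (C1' * P')) with hN0def
    have hMN : M * N0 = 1 := by
      rw [hMdef, hN0def]
      simp only [Matrix.mul_assoc]
      rw [show C2 * (C2' * (Sh' * (C1' * P'))) = Sh' * (C1' * P') from by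
        rw [← Matrix.mul_assoc, h1, Matrix.one_mul]]
      rw [show Sh * (Sh' * (C1' * P')) = C1' * P' from by
        rw [← Matrix.mul_assoc, h2, Matrix.one_mul]]
      rw [show C1 * (C1' * P') = P' from by
        rw [← Matrix.mul_assoc, h3, Matrix.one_mul]]
      exact hPP'
    have hTN : T * N0.submatrix ⇑eτ.symm id = 1 := by
      rw [hTdef, Matrix.submatrix_mul_equiv M N0 id eτ.symm id, hMN, Matrix.submatrix_id_id]
    exact Matrix.isUnit_det_of_right_inverse hTN
  have hcomp : (⇑eτ.symm ∘ ⇑e) = ⇑(Equiv.sumCongr e1 e0).symm := by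
    funext x
    simp only [heτdef, Function.comp_apply, Equiv.symm_trans_apply, Equiv.symm_apply_apply]
  have hAfinal : (Tᵀ * A * T).submatrix ⇑e ⇑e
      = fromBlocks (1 : Matrix (Fin r) (Fin r) ℝ) 0 0
          (0 : Matrix (Fin (n - r)) (Fin (n - r)) ℝ) := by
    rw [hTsub A, hMA, Matrix.submatrix_submatrix, hcomp]
    ext (i | i) (j | j) <;>
      simp [Matrix.fromBlocks, Matrix.submatrix, Equiv.sumCongr_symm, Equiv.sumCongr_apply,
        Sum.map, Matrix.one_apply]
  have hBfinal : (Tᵀ * B * T).submatrix ⇑eτ ⇑eτ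
      = fromBlocks (fromBlocks 0 0 0 (diagonal g1)) (fromBlocks E 0 F 0)
          (fromBlocks Eᵀ Fᵀ 0 0) (fromBlocks 0 0 0 (diagonal g0)) := by
    rw [hTsub B, hMB, Matrix.submatrix_submatrix, Equiv.symm_comp_self,
      Matrix.submatrix_id_id]
  exact ⟨T, hdet, s1, hs1, s0, hs0, g1, g0, E, F, hg1, hg0, hAfinal, hBfinal⟩
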